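/- Every perfect matching of the bipartite graph G contains exactly p edges from the set {{v_i, w_i} : i ∈ [n]}. -/
import Mathlib


open Classical
noncomputable section

/-- The condition for `{v_i, w_j}` to be an edge of the graph `G` (with `0`-based indices,
so index `i` corresponds to vertex `v_{i+1}`/`w_{i+1}`): either `i = j ∈ [n]`, or
`i ∈ [n]` and `j ∈ {n+1, …, 2n-p}`, or `i ∈ {n+1, …, 2n-p}` and `j ∈ [n]`. -/
def EdgeCond (n : ℕ) (i j : ℕ) : Prop :=
  (i < n ∧ j < n ∧ i = j) ∨ (i < n ∧ n ≤ j) ∨ (n ≤ i ∧ j < n)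

/-- The bipartite graph `G` on vertex set `V ⊔ W` with `|V| = |W| = 2n - p`, where `Sum.inl i`
represents `v_{i+1}` and `Sum.inr j` represents `w_{j+1}`. -/
def G (n p : ℕ) : SimpleGraph (Fin (2 * n - p) ⊕ Fin (2 * n - p)) :=
  SimpleGraph.fromRel (fun u w =>
    match u, w with
    | Sum.inl i, Sum.inr j => EdgeCond n (i : ℕ) (j : ℕ)
    | _, _ => False)

lemma G_adj_iff (n p : ℕ) (i j : Fin (2 * n - p)) :
    (G n p).Adj (Sum.inl i) (Sum.inr j) ↔ EdgeCond n (i : ℕ) (j : ℕ) := by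
  simp [G, SimpleGraph.fromRel_adj]

lemma G_not_adj_ll (n p : ℕ) (i j : Fin (2 * n - p)) :
    ¬ (G n p).Adj (Sum.inl i) (Sum.inl j) := by
  simp [G, SimpleGraph.fromRel_adj]

/-- Every perfect matching of `G` contains exactly `p` edges from `{{v_i, w_i} : i ∈ [n]}`. -/
theorem stmt13 (n p : ℕ) (hn : 1 ≤ n) (hp1 : 1 ≤ p) (hpn : p ≤ n)
    (M : (G n p).Subgraph) (hM : M.IsPerfectMatching) :
    (Finset.univ.filter
      (fun i : Fin (2 * n - p) => M.Adj (Sum.inl i) (Sum.inr i))).card = p := by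
  obtain ⟨hmat, hspan⟩ := hM
  have hnN : n ≤ 2 * n - p := by omega
  have hA : ∀ i : Fin (2 * n - p), ∃! u, M.Adj (Sum.inl i) u := fun i => hmat (hspan _)
  have hB : ∀ j : Fin (2 * n - p), ∃! u, M.Adj (Sum.inr j) u := fun j => hmat (hspan _)
  -- partner of inl i is some inr j
  have hf' : ∀ i : Fin (2 * n - p), ∃ j, M.Adj (Sum.inl i) (Sum.inr j) := by
    intro i
    obtain ⟨u, hu, -⟩ := hA i
    match u with
    | Sum.inl k => exact absurd (M.adj_sub hu) (G_not_adj_ll n p i k)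
    | Sum.inr j => exact ⟨j, hu⟩
  have hg' : ∀ j : Fin (2 * n - p), ∃ i, M.Adj (Sum.inl i) (Sum.inr j) := by
    intro j
    obtain ⟨u, hu, -⟩ := hB j
    cases u with
    | inl i => exact ⟨i, hu.symm⟩
    | inr k => exact absurd (M.adj_sub hu) (by simp [G, SimpleGraph.fromRel_adj])
  set f : Fin (2 * n - p) → Fin (2 * n - p) := fun i => Classical.choose (hf' i) with hfdef
  have hf : ∀ i, M.Adj (Sum.inl i) (Sum.inr (f i)) := fun i => Classical.choose_spec (hf' i)
  set g : Fin (2 * n - p) → Fin (2 * n - p) := fun j => Classical.choose (hg' j) with hgdef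
  have hg : ∀ j, M.Adj (Sum.inl (g j)) (Sum.inr j) := fun j => Classical.choose_spec (hg' j)
  have hfg : ∀ j, f (g j) = j := by
    intro j
    have h := (hA (g j)).unique (hf (g j)) (hg j)
    injection h
  have hfinj : Function.Injective f := by
    intro a b hab
    have := (hB (f a)).unique (hf a).symm (hab ▸ (hf b).symm)
    injection this
  have hec : ∀ i : Fin (2 * n - p), EdgeCond n i (f i) := by
    intro i
    exact (G_adj_iff n p i (f i)).mp (M.adj_sub (hf i))
  have hDf : ∀ i : Fin (2 * n - p), M.Adj (Sum.inl i) (Sum.inr i) ↔ f i = i := by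
    intro i
    constructor
    · intro h
      have := (hA i).unique (hf i) h
      injection this
    · intro h
      have h2 := hf i
      rwa [h] at h2
  -- the target set equals {i | f i = i}
  have hDeq : (Finset.univ.filter
      (fun i : Fin (2 * n - p) => M.Adj (Sum.inl i) (Sum.inr i))) =
      Finset.univ.filter (fun i => f i = i) := by
    apply Finset.filter_congr
    intro i _
    exact hDf i
  rw [hDeq]
  -- Big : indices < n
  set Big := Finset.univ.filter (fun i : Fin (2 * n - p) => (i : ℕ) < n) with hBig
  have hBigcard : Big.card = n := by
    rw [hBig]
    rw [show Finset.univ.filter (fun i : Fin (2 * n - p) => (i : ℕ) < n)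
        = Finset.map (Fin.castLEEmb hnN) Finset.univ from ?_]
    · simp
    · ext i
      simp only [Finset.mem_filter, Finset.mem_univ, true_and, Finset.mem_map,
        Fin.castLEEmb_apply]
      constructor
      · intro h
        exact ⟨⟨(i : ℕ), h⟩, by ext; simp⟩
      · rintro ⟨a, rfl⟩
        simp [a.isLt]
  set Hi := Finset.univ.filter (fun j : Fin (2 * n - p) => n ≤ (j : ℕ)) with hHi
  have hHicard : Hi.card = (2 * n - p) - n := by
    have h1 : (Finset.univ.filter (fun i : Fin (2 * n - p) => (i : ℕ) < n)).card
        + (Finset.univ.filter (fun i : Fin (2 * n - p) => ¬ (i : ℕ) < n)).card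
        = Finset.univ.card :=
      Finset.card_filter_add_card_filter_not _
    rw [← hBig] at h1
    have h2 : Hi = Finset.univ.filter (fun i : Fin (2 * n - p) => ¬ (i : ℕ) < n) := by
      apply Finset.filter_congr; intro i _; simp [Nat.not_lt]
    rw [h2]
    have h3 : (Finset.univ : Finset (Fin (2 * n - p))).card = 2 * n - p := by simp
    omega
  -- T : i < n with f i off-diagonal
  set T := Finset.univ.filter
    (fun i : Fin (2 * n - p) => (i : ℕ) < n ∧ n ≤ (f i : ℕ)) with hT
  have hTcard : T.card = Hi.card := by
    apply Finset.card_bij (fun i _ => f i)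
    · intro a ha
      simp only [hT, Finset.mem_filter] at ha
      simp [hHi, ha.2.2]
    · intro a ha b hb hab
      exact hfinj hab
    · intro j hj
      simp only [hHi, Finset.mem_filter, Finset.mem_univ, true_and] at hj
      refine ⟨g j, ?_, hfg j⟩
      have hc := hec (g j)
      rw [hfg j] at hc
      simp only [hT, Finset.mem_filter, Finset.mem_univ, true_and]
      rw [hfg j]
      rcases hc with ⟨h1, h2, h3⟩ | ⟨h1, h2⟩ | ⟨h1, h2⟩ <;> first | exact ⟨h1, hj⟩ | omega
  -- Big = D ∪ T, disjoint
  have hsplit : Big = (Finset.univ.filter (fun i : Fin (2 * n - p) => f i = i)) ∪ T := by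
    ext i
    simp only [hBig, hT, Finset.mem_filter, Finset.mem_union, Finset.mem_univ, true_and]
    constructor
    · intro h
      rcases hec i with ⟨h1, h2, h3⟩ | ⟨h1, h2⟩ | ⟨h1, h2⟩
      · exact Or.inl (Fin.val_injective h3.symm)
      · exact Or.inr ⟨h, h2⟩
      · omega
    · rintro (h | h)
      · rcases hec i with ⟨h1, h2, h3⟩ | ⟨h1, h2⟩ | ⟨h1, h2⟩
        · exact h1
        · exact h1
        · rw [h] at h2; omega
      · exact h.1
  have hdisj : Disjoint (Finset.univ.filter (fun i : Fin (2 * n - p) => f i = i)) T := by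
    rw [Finset.disjoint_left]
    intro i hi hiT
    simp only [Finset.mem_filter, Finset.mem_univ, true_and] at hi
    simp only [hT, Finset.mem_filter, Finset.mem_univ, true_and] at hiT
    rw [hi] at hiT
    omega
  have := Finset.card_union_of_disjoint hdisj
  rw [← hsplit] at this
  omega
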